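/- Let 1 ≤ k ≤ l ≤ r ≤ n, let A, B ∈ [n]^(r), let D = A ∩ B with |D| = l, and let 𝒞 be a family of subsets of [n] each of size at most r−k+1. Suppose that the family ℰ = 𝒞 ∪ {A, B} is intersecting and that |𝒞⟨1⟩| = α^(r−k+1). Then D ∩ 𝒞⟨1⟩ ≠ ∅. -/

import Mathlib

open Finset

/-- The ground set `[n] = {1, …, n}`. -/
def grd (n : ℕ) : Finset ℕ := Finset.Icc 1 n

/-- `[n]^(k)`: all `k`-element subsets of `[n]`. -/
def ksets (n k : ℕ) : Finset (Finset ℕ) := (grd n).powersetCard k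

/-- A family of sets is intersecting if any two of its members meet. -/
def IsIntersecting (𝒜 : Finset (Finset ℕ)) : Prop :=
  ∀ A ∈ 𝒜, ∀ B ∈ 𝒜, (A ∩ B).Nonempty

/-- `𝒜⟨k⟩`: the collection of `k`-sets arising as pairwise intersections of members of `𝒜`. -/
def interk (𝒜 : Finset (Finset ℕ)) (k : ℕ) : Finset (Finset ℕ) :=
  ((𝒜 ×ˢ 𝒜).image fun p => p.1 ∩ p.2).filter fun C => C.card = k

/-- `𝒜⟨1⟩` identified with a set of points: all `x` with `{x} = A ∩ B` for some `A, B ∈ 𝒜`. -/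
def interPts (𝒜 : Finset (Finset ℕ)) : Finset ℕ :=
  (interk 𝒜 1).sup id

/-- `β(n,r,k)`: the maximum of `|𝒜⟨k⟩|` over intersecting families `𝒜 ⊆ [n]^(r)`. -/
noncomputable def beta (n r k : ℕ) : ℕ :=
  sSup {m | ∃ 𝒜 ⊆ ksets n r, IsIntersecting 𝒜 ∧ (interk 𝒜 k).card = m}

/-- `α^(r) = max {β(n,r,1) : n ≥ r}` (finite by Lovász's theorem). -/
noncomputable def alpha (r : ℕ) : ℕ :=
  sSup {m | ∃ n, r ≤ n ∧ beta n r 1 = m}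


theorem sunflower_lemma (s w : ℕ) :
    ∀ (F : Finset (Finset ℕ)), (∀ A ∈ F, A.card = s) →
    Nat.factorial s * w ^ s < F.card →
    ∃ S ⊆ F, S.card = w + 1 ∧ ∃ Y : Finset ℕ, ∀ T ∈ S, ∀ T' ∈ S, T ≠ T' → T ∩ T' = Y := by
  induction s with
  | zero =>
    intro F hcard hlt
    exfalso
    have hsub : F ⊆ {∅} := by
      intro A hA
      simp [Finset.card_eq_zero.mp (hcard A hA)]
    have h1 := Finset.card_le_card hsub
    simp only [Finset.card_singleton] at h1
    simp [Nat.factorial] at hlt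
    omega
  | succ s ih =>
    intro F hcard hlt
    classical
    set P : Finset (Finset (Finset ℕ)) :=
      F.powerset.filter (fun G => ∀ T ∈ G, ∀ T' ∈ G, T ≠ T' → T ∩ T' = ∅) with hP
    have hPne : P.Nonempty := by
      refine ⟨∅, ?_⟩
      simp [hP]
    obtain ⟨G, hGP, hGmax⟩ := Finset.exists_max_image P Finset.card hPne
    have hGsub : G ⊆ F := Finset.mem_powerset.mp (Finset.mem_filter.mp hGP).1
    have hGdisj : ∀ T ∈ G, ∀ T' ∈ G, T ≠ T' → T ∩ T' = ∅ := (Finset.mem_filter.mp hGP).2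
    by_cases hbig : w + 1 ≤ G.card
    · obtain ⟨S, hSG, hScard⟩ := Finset.exists_subset_card_eq hbig
      exact ⟨S, hSG.trans hGsub, hScard, ∅, fun T hT T' hT' hne =>
        hGdisj T (hSG hT) T' (hSG hT') hne⟩
    · push_neg at hbig
      have hGw : G.card ≤ w := by omega
      set U : Finset ℕ := G.biUnion id with hU
      have hUcard : U.card ≤ w * (s + 1) := by
        calc U.card ≤ ∑ T ∈ G, T.card := Finset.card_biUnion_le
        _ ≤ ∑ _T ∈ G, (s+1) := Finset.sum_le_sum (fun T hT => le_of_eq (hcard T (hGsub hT)))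
        _ = G.card * (s+1) := by simp [Finset.sum_const, Nat.smul_one_eq_cast]
        _ ≤ w * (s+1) := Nat.mul_le_mul_right _ hGw
      have hmeet : ∀ A ∈ F, (A ∩ U).Nonempty := by
        intro A hA
        by_contra hcon
        rw [Finset.not_nonempty_iff_eq_empty] at hcon
        have hAG : A ∉ G := by
          intro hAG
          have hAU : A ⊆ U := fun x hx => Finset.mem_biUnion.mpr ⟨A, hAG, hx⟩
          have h2 : A ∩ U = A := Finset.inter_eq_left.mpr hAU
          rw [h2] at hcon
          have h3 := hcard A hA
          rw [hcon] at h3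
          simp at h3
        have hG' : insert A G ∈ P := by
          rw [hP, Finset.mem_filter, Finset.mem_powerset]
          refine ⟨Finset.insert_subset hA hGsub, ?_⟩
          intro T hT T' hT' hne
          rcases Finset.mem_insert.mp hT with hTA | hTG
          · rcases Finset.mem_insert.mp hT' with hT'A | hT'G
            · exact absurd (hTA.trans hT'A.symm) hne
            · apply Finset.eq_empty_of_forall_notMem
              intro z hz
              have hzU : z ∈ U := Finset.mem_biUnion.mpr ⟨T', hT'G, (Finset.mem_inter.mp hz).2⟩
              have : z ∈ A ∩ U := Finset.mem_inter.mpr ⟨hTA ▸ (Finset.mem_inter.mp hz).1, hzU⟩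
              rw [hcon] at this
              exact absurd this (Finset.notMem_empty z)
          · rcases Finset.mem_insert.mp hT' with hT'A | hT'G
            · apply Finset.eq_empty_of_forall_notMem
              intro z hz
              have hzU : z ∈ U := Finset.mem_biUnion.mpr ⟨T, hTG, (Finset.mem_inter.mp hz).1⟩
              have : z ∈ A ∩ U := Finset.mem_inter.mpr ⟨hT'A ▸ (Finset.mem_inter.mp hz).2, hzU⟩
              rw [hcon] at this
              exact absurd this (Finset.notMem_empty z)
            · exact hGdisj T hTG T' hT'G hne
        have := hGmax _ hG'
        rw [Finset.card_insert_of_notMem hAG] at this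
        omega
      have hdeg : ∃ x ∈ U, Nat.factorial s * w ^ s < (F.filter (fun A => x ∈ A)).card := by
        by_contra hcon
        push_neg at hcon
        have hcover : F ⊆ U.biUnion (fun x => F.filter (fun A => x ∈ A)) := by
          intro A hA
          obtain ⟨x, hx⟩ := hmeet A hA
          rw [Finset.mem_inter] at hx
          exact Finset.mem_biUnion.mpr ⟨x, hx.2, Finset.mem_filter.mpr ⟨hA, hx.1⟩⟩
        have h1 : F.card ≤ ∑ x ∈ U, (F.filter (fun A => x ∈ A)).card :=
          le_trans (Finset.card_le_card hcover) Finset.card_biUnion_le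
        have h2 : ∑ x ∈ U, (F.filter (fun A => x ∈ A)).card ≤ U.card * (Nat.factorial s * w ^ s) := by
          calc ∑ x ∈ U, (F.filter (fun A => x ∈ A)).card ≤ ∑ _x ∈ U, (Nat.factorial s * w ^ s) :=
              Finset.sum_le_sum (fun x hx => hcon x hx)
          _ = U.card * (Nat.factorial s * w ^ s) := by simp [Finset.sum_const, Nat.smul_one_eq_cast]
        have h3 : U.card * (Nat.factorial s * w ^ s) ≤ (w * (s+1)) * (Nat.factorial s * w ^ s) :=
          Nat.mul_le_mul_right _ hUcard
        have h4 : (w * (s+1)) * (Nat.factorial s * w ^ s) = Nat.factorial (s+1) * w ^ (s+1) := by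
          rw [Nat.factorial_succ]
          ring
        omega
      obtain ⟨x, _hxU, hxdeg⟩ := hdeg
      set Fx : Finset (Finset ℕ) := (F.filter (fun A => x ∈ A)).image (fun A => A.erase x) with hFx
      have hinj : Set.InjOn (fun A : Finset ℕ => A.erase x) ↑(F.filter (fun A => x ∈ A)) := by
        intro A hA B hB hAB
        simp only [Finset.coe_filter, Set.mem_setOf_eq] at hA hB
        have h2 : insert x (A.erase x) = insert x (B.erase x) := congrArg (insert x) hAB
        rwa [Finset.insert_erase hA.2, Finset.insert_erase hB.2] at h2
      have hFxcard : Fx.card = (F.filter (fun A => x ∈ A)).card := Finset.card_image_of_injOn hinj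
      have hFxsize : ∀ A ∈ Fx, A.card = s := by
        intro A hA
        obtain ⟨B, hB, rfl⟩ := Finset.mem_image.mp hA
        rw [Finset.mem_filter] at hB
        rw [Finset.card_erase_of_mem hB.2, hcard B hB.1]
        omega
      obtain ⟨S', hS'sub, hS'card, Y', hY'⟩ := ih Fx hFxsize (by omega)
      have hxnot : ∀ A ∈ Fx, x ∉ A := by
        intro A hA
        obtain ⟨B, _, rfl⟩ := Finset.mem_image.mp hA
        exact Finset.notMem_erase x B
      refine ⟨S'.image (insert x), ?_, ?_, insert x Y', ?_⟩
      · intro T hT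
        obtain ⟨A, hA, rfl⟩ := Finset.mem_image.mp hT
        obtain ⟨B, hB, hBA⟩ := Finset.mem_image.mp (hS'sub hA)
        rw [Finset.mem_filter] at hB
        rw [← hBA, Finset.insert_erase hB.2]
        exact hB.1
      · rw [Finset.card_image_of_injOn, hS'card]
        intro A hA B hB hAB
        have hxA : x ∉ A := hxnot A (hS'sub hA)
        have hxB : x ∉ B := hxnot B (hS'sub hB)
        have h2 : (insert x A).erase x = (insert x B).erase x := congrArg (fun t => Finset.erase t x) hAB
        rwa [Finset.erase_insert hxA, Finset.erase_insert hxB] at h2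
      · intro T hT T' hT' hne
        obtain ⟨A, hA, rfl⟩ := Finset.mem_image.mp hT
        obtain ⟨A', hA', rfl⟩ := Finset.mem_image.mp hT'
        have hAne : A ≠ A' := by rintro rfl; exact hne rfl
        have hY := hY' A hA A' hA' hAne
        ext z
        simp only [Finset.mem_inter, Finset.mem_insert]
        constructor
        · rintro ⟨hz1, hz2⟩
          rcases hz1 with rfl | hz1
          · exact Or.inl rfl
          · rcases hz2 with hz2 | hz2
            · exact Or.inl hz2
            · exact Or.inr (hY ▸ Finset.mem_inter.mpr ⟨hz1, hz2⟩)
        · rintro (rfl | hz)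
          · exact ⟨Or.inl rfl, Or.inl rfl⟩
          · rw [← hY] at hz
            rcases Finset.mem_inter.mp hz with ⟨h1, h2⟩
            exact ⟨Or.inr h1, Or.inr h2⟩

lemma mem_interk_iff {𝒜 : Finset (Finset ℕ)} {k : ℕ} {C : Finset ℕ} :
    C ∈ interk 𝒜 k ↔ (∃ X ∈ 𝒜, ∃ Y ∈ 𝒜, X ∩ Y = C) ∧ C.card = k := by
  unfold interk
  rw [Finset.mem_filter, Finset.mem_image]
  constructor
  · rintro ⟨⟨p, hp, hpC⟩, hC⟩
    rw [Finset.mem_product] at hp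
    exact ⟨⟨p.1, hp.1, p.2, hp.2, hpC⟩, hC⟩
  · rintro ⟨⟨X, hX, Y, hY, hXY⟩, hC⟩
    exact ⟨⟨(X, Y), Finset.mem_product.mpr ⟨hX, hY⟩, hXY⟩, hC⟩

lemma mem_interPts_iff {𝒜 : Finset (Finset ℕ)} {x : ℕ} :
    x ∈ interPts 𝒜 ↔ ∃ X ∈ 𝒜, ∃ Y ∈ 𝒜, X ∩ Y = {x} := by
  unfold interPts
  rw [Finset.mem_sup]
  constructor
  · rintro ⟨C, hC, hxC⟩
    obtain ⟨⟨X, hX, Y, hY, hXY⟩, hC1⟩ := mem_interk_iff.mp hC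
    obtain ⟨a, rfl⟩ := Finset.card_eq_one.mp hC1
    simp only [id_eq, Finset.mem_singleton] at hxC
    subst hxC
    exact ⟨X, hX, Y, hY, hXY⟩
  · rintro ⟨X, hX, Y, hY, hXY⟩
    exact ⟨{x}, mem_interk_iff.mpr ⟨⟨X, hX, Y, hY, hXY⟩, Finset.card_singleton x⟩, by simp⟩

lemma interPts_card_le (𝒜 : Finset (Finset ℕ)) :
    (interPts 𝒜).card ≤ (interk 𝒜 1).card := by
  unfold interPts
  rw [Finset.sup_eq_biUnion]
  refine le_trans Finset.card_biUnion_le ?_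
  calc ∑ C ∈ interk 𝒜 1, (id C).card ≤ ∑ _C ∈ interk 𝒜 1, 1 := by
        apply Finset.sum_le_sum
        intro C hC
        have := (mem_interk_iff.mp hC).2
        simp [id_eq, this]
  _ = (interk 𝒜 1).card := by simp

/-- Uniform (Lovász-type) bound on the number of singleton intersections. -/
def LB (s : ℕ) : ℕ := s * (Nat.factorial s * (s+1) ^ s)

lemma lovasz_bound {s N : ℕ} {𝒜 : Finset (Finset ℕ)} (hA : 𝒜 ⊆ ksets N s)
    (hI : IsIntersecting 𝒜) : (interk 𝒜 1).card ≤ LB s := by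
  classical
  have hsize : ∀ X ∈ 𝒜, X.card = s := by
    intro X hX
    exact (Finset.mem_powersetCard.mp (hA hX)).2
  rcases Nat.eq_zero_or_pos s with rfl | hs
  · have : interk 𝒜 1 = ∅ := by
      apply Finset.eq_empty_of_forall_notMem
      intro C hC
      obtain ⟨⟨X, hX, Y, hY, hXY⟩, hC1⟩ := mem_interk_iff.mp hC
      have : X = ∅ := Finset.card_eq_zero.mp (hsize X hX)
      subst this
      rw [Finset.empty_inter] at hXY
      subst hXY
      simp at hC1
    simp [this, LB]
  · have hwit : ∀ C : Finset ℕ, ∃ XY : Finset ℕ × Finset ℕ,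
        C ∈ interk 𝒜 1 → XY.1 ∈ 𝒜 ∧ XY.2 ∈ 𝒜 ∧ XY.1 ∩ XY.2 = C := by
      intro C
      by_cases hC : C ∈ interk 𝒜 1
      · obtain ⟨⟨X, hX, Y, hY, hXY⟩, _⟩ := mem_interk_iff.mp hC
        exact ⟨(X, Y), fun _ => ⟨hX, hY, hXY⟩⟩
      · exact ⟨(∅, ∅), fun h => absurd h hC⟩
    choose w hw using hwit
    set pt : Finset ℕ → ℕ := fun C => if h : C.Nonempty then C.min' h else 0 with hpt
    have hptC : ∀ C ∈ interk 𝒜 1, C = {pt C} := by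
      intro C hC
      obtain ⟨a, rfl⟩ := Finset.card_eq_one.mp (mem_interk_iff.mp hC).2
      have hne : ({a} : Finset ℕ).Nonempty := ⟨a, by simp⟩
      simp [hpt, hne]
    set W : Finset (Finset ℕ) := (interk 𝒜 1).image (fun C => (w C).1) with hW
    have hWsubA : W ⊆ 𝒜 := by
      intro X hX
      obtain ⟨C, hC, rfl⟩ := Finset.mem_image.mp hX
      exact (hw C hC).1
    have hcardle : (interk 𝒜 1).card ≤ s * W.card := by
      apply Finset.card_le_mul_card_image
      intro a ha
      obtain ⟨C₀, hC₀, rfl⟩ := Finset.mem_image.mp ha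
      have hfib : ∀ C ∈ (interk 𝒜 1).filter (fun C => (w C).1 = (w C₀).1), pt C ∈ (w C₀).1 := by
        intro C hC
        rw [Finset.mem_filter] at hC
        have h1 := (hw C hC.1).2.2
        have hne : C.Nonempty := by
          rw [← Finset.card_pos, (mem_interk_iff.mp hC.1).2]; omega
        have hmemC : pt C ∈ C := by
          have : pt C = C.min' hne := by simp [hpt, hne]
          rw [this]; exact Finset.min'_mem C hne
        have h3 : pt C ∈ (w C).1 ∩ (w C).2 := by rw [h1]; exact hmemC
        rw [hC.2] at h3
        exact (Finset.mem_inter.mp h3).1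
      have hinj : Set.InjOn pt ↑((interk 𝒜 1).filter (fun C => (w C).1 = (w C₀).1)) := by
        intro C hC C' hC' hCC'
        simp only [Finset.coe_filter, Set.mem_setOf_eq] at hC hC'
        calc C = {pt C} := hptC C hC.1
        _ = {pt C'} := by rw [hCC']
        _ = C' := (hptC C' hC'.1).symm
      have := Finset.card_le_card_of_injOn pt hfib hinj
      calc ((interk 𝒜 1).filter (fun C => (w C).1 = (w C₀).1)).card ≤ (w C₀).1.card := this
      _ = s := hsize _ ((hw C₀ hC₀).1)
    by_contra hcon
    push_neg at hcon
    have hWbig : Nat.factorial s * (s+1) ^ s < W.card := by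
      unfold LB at hcon
      by_contra hWs
      push_neg at hWs
      have := Nat.mul_le_mul_left s hWs
      omega
    obtain ⟨S, hSW, hScard, Y, hYcore⟩ :=
      sunflower_lemma s (s+1) W (fun A hA' => hsize A (hWsubA hA')) hWbig
    have hdes : ∀ A : Finset ℕ, ∃ C : Finset ℕ, A ∈ S → (C ∈ interk 𝒜 1 ∧ (w C).1 = A) := by
      intro A
      by_cases hAS : A ∈ S
      · obtain ⟨C, hC, hCA⟩ := Finset.mem_image.mp (hSW hAS)
        exact ⟨C, fun _ => ⟨hC, hCA⟩⟩
      · exact ⟨∅, fun h => absurd h hAS⟩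
    choose Fc hFc using hdes
    have hS2 : ∀ A ∈ S, Y ⊆ A := by
      intro A hAS
      have h1 : 1 < S.card := by omega
      obtain ⟨A', hA'S, hA'ne⟩ := Finset.exists_mem_ne h1 A
      have h2 := hYcore A hAS A' hA'S (fun h => hA'ne h.symm)
      rw [← h2]
      exact Finset.inter_subset_left
    have hmaps : ∀ A ∈ S, pt (Fc A) ∈ Y := by
      intro A hAS
      obtain ⟨hFcA, hFcA1⟩ := hFc A hAS
      set C := Fc A with hCdef
      have hAB : A ∩ (w C).2 = {pt C} := by
        rw [← hFcA1, (hw C hFcA).2.2]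
        exact hptC C hFcA
      by_contra hxY
      have hB𝒜 : (w C).2 ∈ 𝒜 := (hw C hFcA).2.1
      have hBY : ∀ z ∈ (w C).2, z ∉ Y := by
        intro z hz hzY
        have hzA : z ∈ A := hS2 A hAS hzY
        have : z ∈ A ∩ (w C).2 := Finset.mem_inter.mpr ⟨hzA, hz⟩
        rw [hAB] at this
        rw [Finset.mem_singleton] at this
        subst this
        exact hxY hzY
      have hψ : ∀ A'' : Finset ℕ, ∃ z : ℕ, A'' ∈ S.erase A → z ∈ (w C).2 ∩ A'' := by
        intro A''
        by_cases hm : A'' ∈ S.erase A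
        · have hA''𝒜 : A'' ∈ 𝒜 := hWsubA (hSW (Finset.mem_of_mem_erase hm))
          obtain ⟨z, hz⟩ := hI _ hB𝒜 _ hA''𝒜
          exact ⟨z, fun _ => hz⟩
        · exact ⟨0, fun h => absurd h hm⟩
      choose ψ hψ2 using hψ
      have hψmaps : ∀ A'' ∈ S.erase A, ψ A'' ∈ (w C).2 := by
        intro A'' hm
        exact (Finset.mem_inter.mp (hψ2 A'' hm)).1
      have hψinj : Set.InjOn ψ ↑(S.erase A) := by
        intro A'' hm A''' hm' heq
        simp only [Finset.coe_erase, Set.mem_diff, Finset.mem_coe, Set.mem_singleton_iff] at hm hm'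
        by_contra hne
        have hz1 : ψ A'' ∈ A'' := (Finset.mem_inter.mp (hψ2 A'' (Finset.mem_erase.mpr ⟨hm.2, hm.1⟩))).2
        have hz2 : ψ A'' ∈ A''' := heq ▸ (Finset.mem_inter.mp (hψ2 A''' (Finset.mem_erase.mpr ⟨hm'.2, hm'.1⟩))).2
        have : ψ A'' ∈ A'' ∩ A''' := Finset.mem_inter.mpr ⟨hz1, hz2⟩
        rw [hYcore A'' hm.1 A''' hm'.1 hne] at this
        exact hBY _ (hψmaps A'' (Finset.mem_erase.mpr ⟨hm.2, hm.1⟩)) this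
      have hcount := Finset.card_le_card_of_injOn ψ hψmaps hψinj
      rw [Finset.card_erase_of_mem hAS, hScard, hsize _ hB𝒜] at hcount
      omega
    have hYlt : Y.card < S.card := by
      have hSne : S.Nonempty := by
        rw [← Finset.card_pos, hScard]; omega
      obtain ⟨A₀, hA₀⟩ := hSne
      have h1 : Y.card ≤ A₀.card := Finset.card_le_card (hS2 A₀ hA₀)
      rw [hsize A₀ (hWsubA (hSW hA₀))] at h1
      omega
    obtain ⟨A, hAS, A', hA'S, hne, heq⟩ :=
      Finset.exists_ne_map_eq_of_card_lt_of_maps_to hYlt hmaps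
    have h1 : Fc A = Fc A' := by
      calc Fc A = {pt (Fc A)} := hptC _ (hFc A hAS).1
      _ = {pt (Fc A')} := by rw [heq]
      _ = Fc A' := (hptC _ (hFc A' hA'S).1).symm
    have : A = A' := by
      rw [← (hFc A hAS).2, ← (hFc A' hA'S).2, h1]
    exact hne this

lemma betaSet_bddAbove (n s : ℕ) :
    ∀ m ∈ {m | ∃ 𝒜 ⊆ ksets n s, IsIntersecting 𝒜 ∧ (interk 𝒜 1).card = m}, m ≤ LB s := by
  rintro m ⟨𝒜, h𝒜, hI, rfl⟩
  exact lovasz_bound h𝒜 hI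

lemma le_beta {n s m : ℕ} (𝒜 : Finset (Finset ℕ)) (h𝒜 : 𝒜 ⊆ ksets n s)
    (hI : IsIntersecting 𝒜) (hm : m ≤ (interk 𝒜 1).card) : m ≤ beta n s 1 := by
  refine le_trans hm ?_
  exact le_csSup ⟨LB s, betaSet_bddAbove n s⟩ ⟨𝒜, h𝒜, hI, rfl⟩

lemma beta_le_LB (n s : ℕ) : beta n s 1 ≤ LB s := by
  apply csSup_le
  · exact ⟨0, ∅, by simp [IsIntersecting, interk]⟩
  · exact betaSet_bddAbove n s

lemma beta_le_alpha {n s : ℕ} (h : s ≤ n) : beta n s 1 ≤ alpha s := by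
  apply le_csSup
  · exact ⟨LB s, by rintro m ⟨n', _, rfl⟩; exact beta_le_LB n' s⟩
  · exact ⟨n, h, rfl⟩

lemma capture {s N : ℕ} (hN : s ≤ N) {𝒟 : Finset (Finset ℕ)} (h𝒟 : 𝒟 ⊆ ksets N s)
    (hI : IsIntersecting 𝒟) : (interPts 𝒟).card ≤ alpha s :=
  le_trans (le_beta 𝒟 h𝒟 hI (interPts_card_le 𝒟)) (beta_le_alpha hN)

lemma alpha_pos {s : ℕ} (hs : 1 ≤ s) : 1 ≤ alpha s := by
  have h1 : (1 : ℕ) ≤ beta (2*s-1) s 1 := by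
    set S₁ : Finset ℕ := Finset.Icc 1 s with hS₁
    set S₂ : Finset ℕ := insert 1 (Finset.Icc (s+1) (2*s-1)) with hS₂
    have h1mem : (1:ℕ) ∉ Finset.Icc (s+1) (2*s-1) := by
      simp only [Finset.mem_Icc]; omega
    have hsub : ({S₁, S₂} : Finset (Finset ℕ)) ⊆ ksets (2*s-1) s := by
      intro X hX
      rcases Finset.mem_insert.mp hX with rfl | hX
      · rw [ksets, Finset.mem_powersetCard]
        constructor
        · rw [grd]; intro z hz; rw [Finset.mem_Icc] at hz ⊢; omega
        · rw [hS₁, Nat.card_Icc]; omega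
      · rw [Finset.mem_singleton] at hX
        subst hX
        rw [ksets, Finset.mem_powersetCard]
        constructor
        · rw [grd]
          intro z hz
          rcases Finset.mem_insert.mp hz with rfl | hz
          · rw [Finset.mem_Icc]; omega
          · rw [Finset.mem_Icc] at hz ⊢; omega
        · rw [hS₂, Finset.card_insert_of_notMem h1mem, Nat.card_Icc]; omega
    have hone : ∀ X ∈ ({S₁, S₂} : Finset (Finset ℕ)), (1:ℕ) ∈ X := by
      intro X hX
      rcases Finset.mem_insert.mp hX with rfl | hX
      · rw [hS₁, Finset.mem_Icc]; omega
      · rw [Finset.mem_singleton] at hX; subst hX; exact Finset.mem_insert_self 1 _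
    have hI : IsIntersecting {S₁, S₂} := by
      intro X hX Y hY
      exact ⟨1, Finset.mem_inter.mpr ⟨hone X hX, hone Y hY⟩⟩
    have hkey : S₁ ∩ S₂ = {1} := by
      ext z
      simp only [Finset.mem_inter, Finset.mem_singleton, hS₁, hS₂, Finset.mem_Icc,
        Finset.mem_insert]
      omega
    apply le_beta {S₁, S₂} hsub hI
    rw [Nat.one_le_iff_ne_zero, ← Nat.pos_iff_ne_zero, Finset.card_pos]
    refine ⟨{1}, mem_interk_iff.mpr ⟨⟨S₁, by simp, S₂, by simp, hkey⟩, by simp⟩⟩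
  refine le_trans h1 (beta_le_alpha ?_)
  omega

namespace SchemePad

/-- index of the padding block of a tagged core -/
def bIdx (k : ℕ × Finset ℕ) : ℕ := k.1 + 5 * Encodable.encode k.2

lemma bIdx_inj {k k' : ℕ × Finset ℕ} (h : k.1 < 5) (h' : k'.1 < 5)
    (he : bIdx k = bIdx k') : k = k' := by
  unfold bIdx at he
  have h1 : k.1 = k'.1 := by omega
  have h2 : Encodable.encode k.2 = Encodable.encode k'.2 := by omega
  have h3 : k.2 = k'.2 := Encodable.encode_injective h2
  exact Prod.ext h1 h3

def padOf (M s : ℕ) (k : ℕ × Finset ℕ) : Finset ℕ :=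
  Finset.Ico (M + 1 + bIdx k * s) (M + 1 + bIdx k * s + (s - k.2.card))

def gSet (M s : ℕ) (k : ℕ × Finset ℕ) : Finset ℕ := k.2 ∪ padOf M s k

lemma pad_ge {M s : ℕ} {k : ℕ × Finset ℕ} {z : ℕ} (hz : z ∈ padOf M s k) : M + 1 ≤ z := by
  rw [padOf, Finset.mem_Ico] at hz
  omega

lemma pad_disj {M s : ℕ} {k k' : ℕ × Finset ℕ} (h : k.1 < 5) (h' : k'.1 < 5)
    (hne : k ≠ k') : padOf M s k ∩ padOf M s k' = ∅ := by
  have hidx : bIdx k ≠ bIdx k' := fun he => hne (bIdx_inj h h' he)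
  apply Finset.eq_empty_of_forall_notMem
  intro z hz
  rw [Finset.mem_inter, padOf, padOf, Finset.mem_Ico, Finset.mem_Ico] at hz
  rcases Nat.lt_or_ge (bIdx k) (bIdx k') with hlt | hge
  · have h1 : (bIdx k + 1) * s ≤ bIdx k' * s := Nat.mul_le_mul_right s hlt
    have h2 : (bIdx k + 1) * s = bIdx k * s + s := by ring
    omega
  · have hlt : bIdx k' < bIdx k := by omega
    have h1 : (bIdx k' + 1) * s ≤ bIdx k * s := Nat.mul_le_mul_right s hlt
    have h2 : (bIdx k' + 1) * s = bIdx k' * s + s := by ring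
    omega

lemma core_pad_disj {M s : ℕ} {X : Finset ℕ} (hX : X ⊆ Finset.Icc 1 M) (k : ℕ × Finset ℕ) :
    X ∩ padOf M s k = ∅ := by
  apply Finset.eq_empty_of_forall_notMem
  intro z hz
  rw [Finset.mem_inter] at hz
  have h1 := (Finset.mem_Icc.mp (hX hz.1)).2
  have h2 := pad_ge hz.2
  omega

lemma gSet_inter {M s : ℕ} {k k' : ℕ × Finset ℕ} (h : k.1 < 5) (h' : k'.1 < 5)
    (hX : k.2 ⊆ Finset.Icc 1 M) (hX' : k'.2 ⊆ Finset.Icc 1 M) (hne : k ≠ k') :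
    gSet M s k ∩ gSet M s k' = k.2 ∩ k'.2 := by
  rw [gSet, gSet, Finset.union_inter_distrib_right, Finset.inter_union_distrib_left,
    Finset.inter_union_distrib_left]
  rw [core_pad_disj hX k', pad_disj h h' hne]
  have hpx : padOf M s k ∩ k'.2 = ∅ := by
    rw [Finset.inter_comm]; exact core_pad_disj hX' k
  rw [hpx]
  simp

lemma gSet_card {M s : ℕ} {k : ℕ × Finset ℕ} (hX : k.2 ⊆ Finset.Icc 1 M)
    (hc : k.2.card ≤ s) : (gSet M s k).card = s := by
  rw [gSet, Finset.card_union_of_disjoint]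
  · rw [padOf, Nat.card_Ico]; omega
  · rw [Finset.disjoint_iff_inter_eq_empty]
    exact core_pad_disj hX k

end SchemePad

open SchemePad in
lemma scheme_le_alpha (s M : ℕ) (hs : 1 ≤ s) (hM : 1 ≤ M) (𝒦 : Finset (ℕ × Finset ℕ))
    (htag : ∀ k ∈ 𝒦, k.1 < 5)
    (hsub : ∀ k ∈ 𝒦, k.2 ⊆ Finset.Icc 1 M)
    (hcard : ∀ k ∈ 𝒦, k.2.card ≤ s)
    (hint : ∀ k ∈ 𝒦, ∀ k' ∈ 𝒦, (k.2 ∩ k'.2).Nonempty)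
    (Q : Finset ℕ)
    (hQ : ∀ x ∈ Q, ∃ k ∈ 𝒦, ∃ k' ∈ 𝒦, k ≠ k' ∧ k.2 ∩ k'.2 = {x}) :
    Q.card ≤ alpha s := by
  classical
  set K : ℕ := 𝒦.sup bIdx with hK
  set N : ℕ := M + 1 + (K + 1) * s with hN
  have hsN : s ≤ N := by rw [hN]; nlinarith [Nat.one_le_iff_ne_zero.mp hs]
  set 𝒟 : Finset (Finset ℕ) := 𝒦.image (gSet M s) with h𝒟
  have hmem : ∀ k ∈ 𝒦, gSet M s k ∈ ksets N s := by
    intro k hk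
    rw [ksets, Finset.mem_powersetCard]
    constructor
    · intro z hz
      rw [gSet, Finset.mem_union] at hz
      rw [grd, Finset.mem_Icc]
      rcases hz with hz | hz
      · have := Finset.mem_Icc.mp (hsub k hk hz)
        omega
      · rw [padOf, Finset.mem_Ico] at hz
        have hb : bIdx k ≤ K := Finset.le_sup hk
        have : (bIdx k) * s + (s - k.2.card) ≤ (K+1) * s := by
          have h1 : bIdx k * s ≤ K * s := Nat.mul_le_mul_right s hb
          have h2 : s - k.2.card ≤ s := Nat.sub_le _ _
          nlinarith
        omega
    · exact gSet_card (hsub k hk) (hcard k hk)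
  have h𝒟sub : 𝒟 ⊆ ksets N s := by
    intro X hX
    obtain ⟨k, hk, rfl⟩ := Finset.mem_image.mp hX
    exact hmem k hk
  have hI : IsIntersecting 𝒟 := by
    intro X hX Y hY
    obtain ⟨k, hk, rfl⟩ := Finset.mem_image.mp hX
    obtain ⟨k', hk', rfl⟩ := Finset.mem_image.mp hY
    obtain ⟨z, hz⟩ := hint k hk k' hk'
    rw [Finset.mem_inter] at hz
    exact ⟨z, Finset.mem_inter.mpr ⟨Finset.mem_union_left _ hz.1, Finset.mem_union_left _ hz.2⟩⟩
  have hQsub : Q ⊆ interPts 𝒟 := by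
    intro x hx
    obtain ⟨k, hk, k', hk', hne, hxx⟩ := hQ x hx
    rw [mem_interPts_iff]
    refine ⟨gSet M s k, Finset.mem_image_of_mem _ hk, gSet M s k', Finset.mem_image_of_mem _ hk', ?_⟩
    rw [gSet_inter (htag k hk) (htag k' hk') (hsub k hk) (hsub k' hk') hne, hxx]
  exact le_trans (Finset.card_le_card hQsub) (capture hsN h𝒟sub hI)

lemma interPts_subset {n : ℕ} {𝒞 : Finset (Finset ℕ)} (h𝒞sub : ∀ C ∈ 𝒞, C ⊆ Finset.Icc 1 n) :
    interPts 𝒞 ⊆ Finset.Icc 1 n := by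
  intro x hx
  obtain ⟨X, hX, Y, hY, hXY⟩ := mem_interPts_iff.mp hx
  have : x ∈ X ∩ Y := by rw [hXY]; simp
  exact h𝒞sub X hX (Finset.mem_inter.mp this).1

lemma probe9_contra (n s : ℕ) (hs : 1 ≤ s) (hn : 1 ≤ n) (𝒞 : Finset (Finset ℕ)) (D : Finset ℕ)
    (h𝒞sub : ∀ C ∈ 𝒞, C ⊆ Finset.Icc 1 n) (h𝒞card : ∀ C ∈ 𝒞, C.card ≤ s)
    (hpair : ∀ X ∈ 𝒞, ∀ Y ∈ 𝒞, (X ∩ Y).Nonempty)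
    (hex : ∃ X ∈ 𝒞, ∃ Y ∈ 𝒞, X ∩ Y ⊆ D)
    (hDP : ∀ x ∈ D, x ∉ interPts 𝒞) :
    ∃ y, y ∉ interPts 𝒞 ∧ (insert y (interPts 𝒞)).card ≤ alpha s := by
  classical
  set T : Finset (Finset ℕ × Finset ℕ) := (𝒞 ×ˢ 𝒞).filter (fun q => q.1 ∩ q.2 ⊆ D) with hT
  have hTne : T.Nonempty := by
    obtain ⟨X, hX, Y, hY, hXY⟩ := hex
    exact ⟨(X, Y), Finset.mem_filter.mpr ⟨Finset.mem_product.mpr ⟨hX, hY⟩, hXY⟩⟩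
  obtain ⟨q0, hq0T, hq0min⟩ := Finset.exists_min_image T (fun q => (q.1 ∩ q.2).card) hTne
  rw [hT, Finset.mem_filter, Finset.mem_product] at hq0T
  obtain ⟨⟨hXm, hYm⟩, hq0D⟩ := hq0T
  set Xm := q0.1 with hXmdef
  set Ym := q0.2 with hYmdef
  obtain ⟨y, hy⟩ := hpair Xm hXm Ym hYm
  have hyD : y ∈ D := hq0D hy
  set Ecore : Finset ℕ := Xm \ ((Xm ∩ Ym) \ {y}) with hEcore
  have hyE : y ∈ Ecore := by
    rw [hEcore, Finset.mem_sdiff]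
    exact ⟨(Finset.mem_inter.mp hy).1, by simp⟩
  have hEmeets : ∀ Z ∈ 𝒞, (Ecore ∩ Z).Nonempty := by
    intro Z hZ
    by_contra hcon
    rw [Finset.not_nonempty_iff_eq_empty] at hcon
    have hsub2 : Xm ∩ Z ⊆ (Xm ∩ Ym) \ {y} := by
      intro z hz
      by_contra hz2
      have : z ∈ Ecore ∩ Z := by
        rw [Finset.mem_inter, hEcore, Finset.mem_sdiff]
        exact ⟨⟨(Finset.mem_inter.mp hz).1, hz2⟩, (Finset.mem_inter.mp hz).2⟩
      rw [hcon] at this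
      exact absurd this (Finset.notMem_empty z)
    have hZT : (Xm, Z) ∈ T := by
      rw [hT, Finset.mem_filter, Finset.mem_product]
      refine ⟨⟨hXm, hZ⟩, ?_⟩
      intro z hz
      exact (Finset.mem_sdiff.mp (hsub2 hz)).1 |> fun h => hq0D h
    have hmin := hq0min _ hZT
    have hcard2 : (Xm ∩ Z).card ≤ ((Xm ∩ Ym) \ {y}).card := Finset.card_le_card hsub2
    have hcard3 : ((Xm ∩ Ym) \ {y}).card = (Xm ∩ Ym).card - 1 := by
      rw [Finset.card_sdiff_of_subset (Finset.singleton_subset_iff.mpr hy), Finset.card_singleton]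
    have hpos : 0 < (Xm ∩ Ym).card := Finset.card_pos.mpr ⟨y, hy⟩
    simp only at hmin
    omega
  set P := interPts 𝒞 with hP
  have hPsub : P ⊆ Finset.Icc 1 n := interPts_subset h𝒞sub
  set 𝒦 : Finset (ℕ × Finset ℕ) :=
    (𝒞.image fun C => (0, C)) ∪ (𝒞.image fun C => (1, C)) ∪ {(2, Ecore)} with h𝒦
  have hKelim : ∀ kk ∈ 𝒦, (∃ C ∈ 𝒞, kk = (0, C) ∨ kk = (1, C)) ∨ kk = (2, Ecore) := by
    intro kk hkk
    rw [h𝒦] at hkk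
    simp only [Finset.mem_union, Finset.mem_image, Finset.mem_singleton] at hkk
    rcases hkk with (⟨C, hC, rfl⟩ | ⟨C, hC, rfl⟩) | rfl
    · exact Or.inl ⟨C, hC, Or.inl rfl⟩
    · exact Or.inl ⟨C, hC, Or.inr rfl⟩
    · exact Or.inr rfl
  have hcoreP : ∀ kk ∈ 𝒦, kk.2 ⊆ Finset.Icc 1 n ∧ kk.2.card ≤ s ∧
      (∀ Z ∈ 𝒞, (kk.2 ∩ Z).Nonempty) := by
    intro kk hkk
    rcases hKelim kk hkk with ⟨C, hC, rfl | rfl⟩ | rfl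
    · exact ⟨h𝒞sub C hC, h𝒞card C hC, fun Z hZ => hpair C hC Z hZ⟩
    · exact ⟨h𝒞sub C hC, h𝒞card C hC, fun Z hZ => hpair C hC Z hZ⟩
    · refine ⟨?_, ?_, hEmeets⟩
      · exact fun z hz => h𝒞sub Xm hXm (Finset.mem_sdiff.mp hz).1
      · exact le_trans (Finset.card_le_card (Finset.sdiff_subset)) (h𝒞card Xm hXm)
  refine ⟨y, hDP y hyD, ?_⟩
  apply scheme_le_alpha s n hs hn 𝒦
  · intro kk hkk
    rcases hKelim kk hkk with ⟨C, hC, rfl | rfl⟩ | rfl <;> norm_num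
  · exact fun kk hkk => (hcoreP kk hkk).1
  · exact fun kk hkk => (hcoreP kk hkk).2.1
  · intro kk hkk kk' hkk'
    rcases hKelim kk' hkk' with ⟨C, hC, rfl | rfl⟩ | rfl
    · exact (hcoreP kk hkk).2.2 C hC
    · exact (hcoreP kk hkk).2.2 C hC
    · rcases hKelim kk hkk with ⟨C, hC, rfl | rfl⟩ | rfl
      · obtain ⟨z, hz⟩ := hEmeets C hC
        exact ⟨z, by rw [Finset.inter_comm]; exact hz⟩
      · obtain ⟨z, hz⟩ := hEmeets C hC
        exact ⟨z, by rw [Finset.inter_comm]; exact hz⟩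
      · exact ⟨y, Finset.mem_inter.mpr ⟨hyE, hyE⟩⟩
  · intro x hx
    rcases Finset.mem_insert.mp hx with rfl | hxP
    · -- new point y from (2, Ecore) ∩ (0, Ym)
      refine ⟨(2, Ecore), ?_, (0, Ym), ?_, by simp, ?_⟩
      · rw [h𝒦]; simp
      · rw [h𝒦]; simp only [Finset.mem_union, Finset.mem_image, Finset.mem_singleton]
        exact Or.inl (Or.inl ⟨Ym, hYm, rfl⟩)
      · show Ecore ∩ Ym = {x}
        rw [hEcore]
        ext z
        simp only [Finset.mem_inter, Finset.mem_sdiff, Finset.mem_singleton, not_and, not_not]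
        constructor
        · rintro ⟨⟨hzX, hzn⟩, hzY⟩
          exact hzn ⟨hzX, hzY⟩
        · rintro rfl
          exact ⟨⟨(Finset.mem_inter.mp hy).1, fun _ => rfl⟩, (Finset.mem_inter.mp hy).2⟩
    · obtain ⟨X, hX, Y, hY, hXY⟩ := mem_interPts_iff.mp hxP
      refine ⟨(0, X), ?_, (1, Y), ?_, by simp, hXY⟩
      · rw [h𝒦]; simp only [Finset.mem_union, Finset.mem_image, Finset.mem_singleton]
        exact Or.inl (Or.inl ⟨X, hX, rfl⟩)
      · rw [h𝒦]; simp only [Finset.mem_union, Finset.mem_image, Finset.mem_singleton]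
        exact Or.inl (Or.inr ⟨Y, hY, rfl⟩)

lemma schemeII_contra (n s : ℕ) (hs : 1 ≤ s) (hn : 1 ≤ n) (𝒞 : Finset (Finset ℕ))
    (A B D : Finset ℕ)
    (h𝒞sub : ∀ C ∈ 𝒞, C ⊆ Finset.Icc 1 n) (h𝒞card : ∀ C ∈ 𝒞, C.card ≤ s)
    (hA' : A \ D ⊆ Finset.Icc 1 n) (hB' : B \ D ⊆ Finset.Icc 1 n)
    (hABdisj : (A \ D) ∩ (B \ D) = ∅)
    (hAc : (A \ D).card + 1 ≤ s) (hBc : (B \ D).card + 1 ≤ s)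
    (hpair : ∀ X ∈ 𝒞, ∀ Y ∈ 𝒞, (X ∩ Y).Nonempty)
    (hCA : ∀ C ∈ 𝒞, (C ∩ (A \ D)).Nonempty) (hCB : ∀ C ∈ 𝒞, (C ∩ (B \ D)).Nonempty) :
    ∃ y, y ∉ interPts 𝒞 ∧ (insert y (interPts 𝒞)).card ≤ alpha s := by
  classical
  set ν : ℕ := n + 1 with hν
  have hνn : ν ∉ Finset.Icc 1 n := by rw [hν, Finset.mem_Icc]; omega
  set P := interPts 𝒞 with hP
  have hPsub : P ⊆ Finset.Icc 1 n := interPts_subset h𝒞sub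
  have hνP : ν ∉ P := fun h => hνn (hPsub h)
  set EA : Finset ℕ := (A \ D) ∪ {ν} with hEA
  set EB : Finset ℕ := (B \ D) ∪ {ν} with hEB
  set 𝒦 : Finset (ℕ × Finset ℕ) :=
    (𝒞.image fun C => (0, C)) ∪ (𝒞.image fun C => (1, C)) ∪ {(2, EA)} ∪ {(3, EB)} with h𝒦
  have hKelim : ∀ kk ∈ 𝒦, (∃ C ∈ 𝒞, kk = (0, C) ∨ kk = (1, C)) ∨ kk = (2, EA) ∨ kk = (3, EB) := by
    intro kk hkk
    rw [h𝒦] at hkk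
    simp only [Finset.mem_union, Finset.mem_image, Finset.mem_singleton] at hkk
    rcases hkk with ((⟨C, hC, rfl⟩ | ⟨C, hC, rfl⟩) | rfl) | rfl
    · exact Or.inl ⟨C, hC, Or.inl rfl⟩
    · exact Or.inl ⟨C, hC, Or.inr rfl⟩
    · exact Or.inr (Or.inl rfl)
    · exact Or.inr (Or.inr rfl)
  have hmeetEA : ∀ C ∈ 𝒞, (C ∩ EA).Nonempty := by
    intro C hC
    obtain ⟨z, hz⟩ := hCA C hC
    rw [Finset.mem_inter] at hz
    exact ⟨z, Finset.mem_inter.mpr ⟨hz.1, Finset.mem_union_left _ hz.2⟩⟩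
  have hmeetEB : ∀ C ∈ 𝒞, (C ∩ EB).Nonempty := by
    intro C hC
    obtain ⟨z, hz⟩ := hCB C hC
    rw [Finset.mem_inter] at hz
    exact ⟨z, Finset.mem_inter.mpr ⟨hz.1, Finset.mem_union_left _ hz.2⟩⟩
  have hνEA : ν ∈ EA := Finset.mem_union_right _ (Finset.mem_singleton_self ν)
  have hνEB : ν ∈ EB := Finset.mem_union_right _ (Finset.mem_singleton_self ν)
  refine ⟨ν, hνP, ?_⟩
  apply scheme_le_alpha s (n+1) hs (by omega) 𝒦
  · intro kk hkk
    rcases hKelim kk hkk with ⟨C, hC, rfl | rfl⟩ | rfl | rfl <;> norm_num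
  · intro kk hkk
    have hIccn : Finset.Icc 1 n ⊆ Finset.Icc 1 (n+1) := by
      intro z hz; rw [Finset.mem_Icc] at hz ⊢; omega
    rcases hKelim kk hkk with ⟨C, hC, rfl | rfl⟩ | rfl | rfl
    · exact (h𝒞sub C hC).trans hIccn
    · exact (h𝒞sub C hC).trans hIccn
    · show EA ⊆ Finset.Icc 1 (n+1)
      rw [hEA]
      apply Finset.union_subset ((hA').trans hIccn)
      intro z hz; rw [Finset.mem_singleton] at hz; subst hz; rw [Finset.mem_Icc]; omega
    · show EB ⊆ Finset.Icc 1 (n+1)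
      rw [hEB]
      apply Finset.union_subset ((hB').trans hIccn)
      intro z hz; rw [Finset.mem_singleton] at hz; subst hz; rw [Finset.mem_Icc]; omega
  · intro kk hkk
    rcases hKelim kk hkk with ⟨C, hC, rfl | rfl⟩ | rfl | rfl
    · exact h𝒞card C hC
    · exact h𝒞card C hC
    · show EA.card ≤ s
      rw [hEA]
      exact le_trans (Finset.card_union_le _ _) (by simpa using hAc)
    · show EB.card ≤ s
      rw [hEB]
      exact le_trans (Finset.card_union_le _ _) (by simpa using hBc)
  · intro kk hkk kk' hkk'
    rcases hKelim kk hkk with ⟨C, hC, rfl | rfl⟩ | rfl | rfl <;>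
      rcases hKelim kk' hkk' with ⟨C', hC', rfl | rfl⟩ | rfl | rfl <;>
      simp only
    · exact hpair C hC C' hC'
    · exact hpair C hC C' hC'
    · exact hmeetEA C hC
    · exact hmeetEB C hC
    · exact hpair C hC C' hC'
    · exact hpair C hC C' hC'
    · exact hmeetEA C hC
    · exact hmeetEB C hC
    · obtain ⟨z, hz⟩ := hmeetEA C' hC'
      exact ⟨z, by rw [Finset.inter_comm]; exact hz⟩
    · obtain ⟨z, hz⟩ := hmeetEA C' hC'
      exact ⟨z, by rw [Finset.inter_comm]; exact hz⟩
    · exact ⟨ν, Finset.mem_inter.mpr ⟨hνEA, hνEA⟩⟩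
    · exact ⟨ν, Finset.mem_inter.mpr ⟨hνEA, hνEB⟩⟩
    · obtain ⟨z, hz⟩ := hmeetEB C' hC'
      exact ⟨z, by rw [Finset.inter_comm]; exact hz⟩
    · obtain ⟨z, hz⟩ := hmeetEB C' hC'
      exact ⟨z, by rw [Finset.inter_comm]; exact hz⟩
    · exact ⟨ν, Finset.mem_inter.mpr ⟨hνEB, hνEA⟩⟩
    · exact ⟨ν, Finset.mem_inter.mpr ⟨hνEB, hνEB⟩⟩
  · intro x hx
    rcases Finset.mem_insert.mp hx with rfl | hxP
    · refine ⟨(2, EA), ?_, (3, EB), ?_, by simp, ?_⟩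
      · rw [h𝒦]; simp
      · rw [h𝒦]; simp
      · show EA ∩ EB = {ν}
        rw [hEA, hEB]
        ext z
        simp only [Finset.mem_inter, Finset.mem_union, Finset.mem_singleton]
        constructor
        · rintro ⟨hz1 | hz1, hz2 | hz2⟩
          · exfalso
            have hzz : z ∈ (A \ D) ∩ (B \ D) := Finset.mem_inter.mpr ⟨hz1, hz2⟩
            rw [hABdisj] at hzz
            exact absurd hzz (Finset.notMem_empty z)
          · exact hz2
          · exact hz1
          · exact hz1
        · rintro rfl
          exact ⟨Or.inr rfl, Or.inr rfl⟩
    · obtain ⟨X, hX, Y, hY, hXY⟩ := mem_interPts_iff.mp hxP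
      refine ⟨(0, X), ?_, (1, Y), ?_, by simp, hXY⟩
      · rw [h𝒦]; simp only [Finset.mem_union, Finset.mem_image, Finset.mem_singleton]
        exact Or.inl (Or.inl (Or.inl ⟨X, hX, rfl⟩))
      · rw [h𝒦]; simp only [Finset.mem_union, Finset.mem_image, Finset.mem_singleton]
        exact Or.inl (Or.inl (Or.inr ⟨Y, hY, rfl⟩))

lemma sdiff_card_lt {C D : Finset ℕ} (h : (C ∩ D).Nonempty) : (C \ D).card < C.card := by
  obtain ⟨d, hd⟩ := h
  rw [Finset.mem_inter] at hd
  apply Finset.card_lt_card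
  rw [Finset.ssubset_iff_of_subset Finset.sdiff_subset]
  exact ⟨d, hd.1, by rw [Finset.mem_sdiff]; tauto⟩

lemma schemeIV_contra (n s : ℕ) (hs : 2 ≤ s) (hn : 1 ≤ n) (𝒞 : Finset (Finset ℕ)) (D : Finset ℕ)
    (h𝒞sub : ∀ C ∈ 𝒞, C ⊆ Finset.Icc 1 n) (h𝒞card : ∀ C ∈ 𝒞, C.card ≤ s)
    (h9 : ∀ X ∈ 𝒞, ∀ Y ∈ 𝒞, ((X ∩ Y) \ D).Nonempty)
    (hmeetD : ∀ C ∈ 𝒞, (C ∩ D).Nonempty)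
    (h𝒞ne : 𝒞.Nonempty)
    (hDP : ∀ x ∈ D, x ∉ interPts 𝒞) :
    ∃ y, y ∉ interPts 𝒞 ∧ (insert y (interPts 𝒞)).card ≤ alpha s := by
  classical
  obtain ⟨C₀, hC₀⟩ := h𝒞ne
  set P := interPts 𝒞 with hP
  have hPsub : P ⊆ Finset.Icc 1 n := interPts_subset h𝒞sub
  have hω1P : (n+1) ∉ P := fun h => by have := Finset.mem_Icc.mp (hPsub h); omega
  have hμcard : ∀ C ∈ 𝒞, (C \ D).card + 1 ≤ s := by
    intro C hC
    have := sdiff_card_lt (hmeetD C hC)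
    have := h𝒞card C hC
    omega
  set 𝒦 : Finset (ℕ × Finset ℕ) :=
    (𝒞.image fun C => (0, (C \ D) ∪ {n+1})) ∪ (𝒞.image fun C => (1, (C \ D) ∪ {n+2}))
      ∪ {(2, ({n+1, n+2} : Finset ℕ))} with h𝒦
  have hKelim : ∀ kk ∈ 𝒦, (∃ C ∈ 𝒞, kk = (0, (C \ D) ∪ {n+1}) ∨ kk = (1, (C \ D) ∪ {n+2}))
      ∨ kk = (2, ({n+1, n+2} : Finset ℕ)) := by
    intro kk hkk
    rw [h𝒦] at hkk
    simp only [Finset.mem_union, Finset.mem_image, Finset.mem_singleton] at hkk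
    rcases hkk with (⟨C, hC, rfl⟩ | ⟨C, hC, rfl⟩) | rfl
    · exact Or.inl ⟨C, hC, Or.inl rfl⟩
    · exact Or.inl ⟨C, hC, Or.inr rfl⟩
    · exact Or.inr rfl
  have hsdn : ∀ C ∈ 𝒞, C \ D ⊆ Finset.Icc 1 n := fun C hC z hz =>
    h𝒞sub C hC (Finset.mem_sdiff.mp hz).1
  have hcross : ∀ X ∈ 𝒞, ∀ Y ∈ 𝒞, ∀ (u v : ℕ),
      (((X \ D) ∪ {u}) ∩ ((Y \ D) ∪ {v})).Nonempty := by
    intro X hX Y hY u v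
    obtain ⟨z, hz⟩ := h9 X hX Y hY
    rw [Finset.mem_sdiff, Finset.mem_inter] at hz
    refine ⟨z, Finset.mem_inter.mpr ⟨?_, ?_⟩⟩
    · exact Finset.mem_union_left _ (Finset.mem_sdiff.mpr ⟨hz.1.1, hz.2⟩)
    · exact Finset.mem_union_left _ (Finset.mem_sdiff.mpr ⟨hz.1.2, hz.2⟩)
  refine ⟨n+1, hω1P, ?_⟩
  apply scheme_le_alpha s (n+2) (by omega) (by omega) 𝒦
  · intro kk hkk
    rcases hKelim kk hkk with ⟨C, hC, rfl | rfl⟩ | rfl <;> norm_num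
  · intro kk hkk
    rcases hKelim kk hkk with ⟨C, hC, rfl | rfl⟩ | rfl
    · show (C \ D) ∪ {n+1} ⊆ Finset.Icc 1 (n+2)
      apply Finset.union_subset
      · intro z hz
        have := Finset.mem_Icc.mp (hsdn C hC hz)
        rw [Finset.mem_Icc]; omega
      · intro z hz; rw [Finset.mem_singleton] at hz; subst hz; rw [Finset.mem_Icc]; omega
    · show (C \ D) ∪ {n+2} ⊆ Finset.Icc 1 (n+2)
      apply Finset.union_subset
      · intro z hz
        have := Finset.mem_Icc.mp (hsdn C hC hz)
        rw [Finset.mem_Icc]; omega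
      · intro z hz; rw [Finset.mem_singleton] at hz; subst hz; rw [Finset.mem_Icc]; omega
    · show ({n+1, n+2} : Finset ℕ) ⊆ Finset.Icc 1 (n+2)
      intro z hz
      rcases Finset.mem_insert.mp hz with rfl | hz
      · rw [Finset.mem_Icc]; omega
      · rw [Finset.mem_singleton] at hz; subst hz; rw [Finset.mem_Icc]; omega
  · intro kk hkk
    rcases hKelim kk hkk with ⟨C, hC, rfl | rfl⟩ | rfl
    · exact le_trans (Finset.card_union_le _ _) (by simpa using hμcard C hC)
    · exact le_trans (Finset.card_union_le _ _) (by simpa using hμcard C hC)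
    · show ({n+1, n+2} : Finset ℕ).card ≤ s
      have : ({n+1, n+2} : Finset ℕ).card ≤ 2 := Finset.card_insert_le _ _ |>.trans (by simp)
      omega
  · intro kk hkk kk' hkk'
    rcases hKelim kk hkk with ⟨C, hC, rfl | rfl⟩ | rfl <;>
      rcases hKelim kk' hkk' with ⟨C', hC', rfl | rfl⟩ | rfl <;> simp only
    · exact hcross C hC C' hC' _ _
    · exact hcross C hC C' hC' _ _
    · exact ⟨n+1, Finset.mem_inter.mpr ⟨Finset.mem_union_right _ (by simp), by simp⟩⟩
    · exact hcross C hC C' hC' _ _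
    · exact hcross C hC C' hC' _ _
    · exact ⟨n+2, Finset.mem_inter.mpr ⟨Finset.mem_union_right _ (by simp), by simp⟩⟩
    · exact ⟨n+1, Finset.mem_inter.mpr ⟨by simp, Finset.mem_union_right _ (by simp)⟩⟩
    · exact ⟨n+2, Finset.mem_inter.mpr ⟨by simp, Finset.mem_union_right _ (by simp)⟩⟩
    · exact ⟨n+1, Finset.mem_inter.mpr ⟨by simp, by simp⟩⟩
  · intro x hx
    rcases Finset.mem_insert.mp hx with rfl | hxP
    · refine ⟨(2, ({n+1, n+2} : Finset ℕ)), ?_, (0, (C₀ \ D) ∪ {n+1}), ?_, by simp, ?_⟩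
      · rw [h𝒦]; simp
      · rw [h𝒦]; simp only [Finset.mem_union, Finset.mem_image, Finset.mem_singleton]
        exact Or.inl (Or.inl ⟨C₀, hC₀, rfl⟩)
      · show ({n+1, n+2} : Finset ℕ) ∩ ((C₀ \ D) ∪ {n+1}) = {n+1}
        ext z
        simp only [Finset.mem_inter, Finset.mem_union, Finset.mem_sdiff, Finset.mem_singleton,
          Finset.mem_insert]
        constructor
        · rintro ⟨rfl | rfl, h2 | h2⟩
          · exfalso
            have := Finset.mem_Icc.mp (h𝒞sub C₀ hC₀ h2.1)
            omega
          · rfl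
          · exfalso
            have := Finset.mem_Icc.mp (h𝒞sub C₀ hC₀ h2.1)
            omega
          · exact absurd h2 (by omega)
        · rintro rfl
          exact ⟨Or.inl rfl, Or.inr rfl⟩
    · obtain ⟨X, hX, Y, hY, hXY⟩ := mem_interPts_iff.mp hxP
      have hxX : x ∈ X := by
        have : x ∈ X ∩ Y := by rw [hXY]; simp
        exact (Finset.mem_inter.mp this).1
      have hxY : x ∈ Y := by
        have : x ∈ X ∩ Y := by rw [hXY]; simp
        exact (Finset.mem_inter.mp this).2
      have hxn := Finset.mem_Icc.mp (h𝒞sub X hX hxX)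
      have hxD : x ∉ D := fun h => hDP x h hxP
      refine ⟨(0, (X \ D) ∪ {n+1}), ?_, (1, (Y \ D) ∪ {n+2}), ?_, by simp, ?_⟩
      · rw [h𝒦]; simp only [Finset.mem_union, Finset.mem_image, Finset.mem_singleton]
        exact Or.inl (Or.inl ⟨X, hX, rfl⟩)
      · rw [h𝒦]; simp only [Finset.mem_union, Finset.mem_image, Finset.mem_singleton]
        exact Or.inl (Or.inr ⟨Y, hY, rfl⟩)
      · show ((X \ D) ∪ {n+1}) ∩ ((Y \ D) ∪ {n+2}) = {x}
        ext z
        simp only [Finset.mem_inter, Finset.mem_union, Finset.mem_sdiff, Finset.mem_singleton]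
        constructor
        · rintro ⟨h1 | rfl, h2 | h2⟩
          · have : z ∈ X ∩ Y := Finset.mem_inter.mpr ⟨h1.1, h2.1⟩
            rw [hXY, Finset.mem_singleton] at this
            exact this
          · exfalso
            have := Finset.mem_Icc.mp (h𝒞sub X hX h1.1)
            omega
          · exfalso
            have := Finset.mem_Icc.mp (h𝒞sub Y hY h2.1)
            omega
          · exfalso; omega
        · rintro rfl
          exact ⟨Or.inl ⟨hxX, hxD⟩, Or.inl ⟨hxY, hxD⟩⟩

lemma schemeA_contra (n s : ℕ) (hs : 1 ≤ s) (hn : 1 ≤ n) (𝒞 : Finset (Finset ℕ))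
    (A D : Finset ℕ)
    (h𝒞sub : ∀ C ∈ 𝒞, C ⊆ Finset.Icc 1 n) (h𝒞card : ∀ C ∈ 𝒞, C.card ≤ s)
    (hAsub : A ⊆ Finset.Icc 1 n)
    (hEcard : (A \ D).card + 1 ≤ s)
    (hpair : ∀ X ∈ 𝒞, ∀ Y ∈ 𝒞, (X ∩ Y).Nonempty)
    (h9 : ∀ X ∈ 𝒞, ∀ Y ∈ 𝒞, ((X ∩ Y) \ D).Nonempty)
    (hDP : ∀ x ∈ D, x ∉ interPts 𝒞)
    (haA : (A \ D).Nonempty)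
    (hclingne : ∃ C ∈ 𝒞, C ∩ (A \ D) = ∅)
    (hmeetA : ∀ C ∈ 𝒞, (C ∩ A).Nonempty) :
    ∃ y, y ∉ interPts 𝒞 ∧ (insert y (interPts 𝒞)).card ≤ alpha s := by
  classical
  obtain ⟨a, ha⟩ := haA
  have han := Finset.mem_Icc.mp (hAsub (Finset.mem_sdiff.mp ha).1)
  set 𝒞A : Finset (Finset ℕ) := 𝒞.filter (fun C => C ∩ (A \ D) = ∅) with h𝒞A
  obtain ⟨Cs, hCs𝒞, hCscling⟩ := hclingne
  have hCsA : Cs ∈ 𝒞A := Finset.mem_filter.mpr ⟨hCs𝒞, hCscling⟩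
  have hCD : ∀ C ∈ 𝒞A, (C ∩ D).Nonempty := by
    intro C hC
    rw [h𝒞A, Finset.mem_filter] at hC
    obtain ⟨z, hz⟩ := hmeetA C hC.1
    rw [Finset.mem_inter] at hz
    refine ⟨z, Finset.mem_inter.mpr ⟨hz.1, ?_⟩⟩
    by_contra hzD
    have : z ∈ C ∩ (A \ D) := Finset.mem_inter.mpr ⟨hz.1, Finset.mem_sdiff.mpr ⟨hz.2, hzD⟩⟩
    rw [hC.2] at this
    exact absurd this (Finset.notMem_empty z)
  have hμcard : ∀ C ∈ 𝒞A, (C \ D).card + 1 ≤ s := by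
    intro C hC
    have h1 := sdiff_card_lt (hCD C hC)
    have h2 := h𝒞card C (Finset.mem_filter.mp hC).1
    omega
  have hanotin : ∀ C ∈ 𝒞A, a ∉ C := by
    intro C hC haC
    rw [h𝒞A, Finset.mem_filter] at hC
    have : a ∈ C ∩ (A \ D) := Finset.mem_inter.mpr ⟨haC, ha⟩
    rw [hC.2] at this
    exact absurd this (Finset.notMem_empty a)
  set P := interPts 𝒞 with hP
  have hPsub : P ⊆ Finset.Icc 1 n := interPts_subset h𝒞sub
  have hωP : (n+1) ∉ P := fun h => by have := Finset.mem_Icc.mp (hPsub h); omega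
  set 𝒦 : Finset (ℕ × Finset ℕ) :=
    ((𝒞 \ 𝒞A).image fun C => (0, C)) ∪ ((𝒞 \ 𝒞A).image fun C => (1, C))
      ∪ (𝒞A.image fun C => (2, (C \ D) ∪ {n+1}))
      ∪ (𝒞A.image fun C => (3, (C \ D) ∪ {a}))
      ∪ {(4, (A \ D) ∪ {n+1})} with h𝒦
  have hKelim : ∀ kk ∈ 𝒦,
      (∃ C, (C ∈ 𝒞 ∧ C ∉ 𝒞A) ∧ (kk = (0, C) ∨ kk = (1, C)))
      ∨ (∃ C ∈ 𝒞A, kk = (2, (C \ D) ∪ {n+1}) ∨ kk = (3, (C \ D) ∪ {a}))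
      ∨ kk = (4, (A \ D) ∪ {n+1}) := by
    intro kk hkk
    rw [h𝒦] at hkk
    simp only [Finset.mem_union, Finset.mem_image, Finset.mem_singleton, Finset.mem_sdiff] at hkk
    rcases hkk with (((⟨C, hC, rfl⟩ | ⟨C, hC, rfl⟩) | ⟨C, hC, rfl⟩) | ⟨C, hC, rfl⟩) | rfl
    · exact Or.inl ⟨C, hC, Or.inl rfl⟩
    · exact Or.inl ⟨C, hC, Or.inr rfl⟩
    · exact Or.inr (Or.inl ⟨C, hC, Or.inl rfl⟩)
    · exact Or.inr (Or.inl ⟨C, hC, Or.inr rfl⟩)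
    · exact Or.inr (Or.inr rfl)
  have hrawmeetsAD : ∀ C, C ∈ 𝒞 → C ∉ 𝒞A → (C ∩ (A \ D)).Nonempty := by
    intro C hC hCA
    rw [h𝒞A, Finset.mem_filter] at hCA
    rcases Finset.eq_empty_or_nonempty (C ∩ (A \ D)) with he | hne
    · exact absurd ⟨hC, he⟩ hCA
    · exact hne
  -- generic meeting facts
  have hcrossμ : ∀ X ∈ 𝒞, ∀ Y ∈ 𝒞, ∀ (u v : ℕ),
      (((X \ D) ∪ {u}) ∩ ((Y \ D) ∪ {v})).Nonempty := by
    intro X hX Y hY u v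
    obtain ⟨z, hz⟩ := h9 X hX Y hY
    rw [Finset.mem_sdiff, Finset.mem_inter] at hz
    exact ⟨z, Finset.mem_inter.mpr
      ⟨Finset.mem_union_left _ (Finset.mem_sdiff.mpr ⟨hz.1.1, hz.2⟩),
       Finset.mem_union_left _ (Finset.mem_sdiff.mpr ⟨hz.1.2, hz.2⟩)⟩⟩
  have hrawμ : ∀ X ∈ 𝒞, ∀ Y ∈ 𝒞, ∀ (u : ℕ), (X ∩ ((Y \ D) ∪ {u})).Nonempty := by
    intro X hX Y hY u
    obtain ⟨z, hz⟩ := h9 X hX Y hY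
    rw [Finset.mem_sdiff, Finset.mem_inter] at hz
    exact ⟨z, Finset.mem_inter.mpr
      ⟨hz.1.1, Finset.mem_union_left _ (Finset.mem_sdiff.mpr ⟨hz.1.2, hz.2⟩)⟩⟩
  have hμraw : ∀ X ∈ 𝒞, ∀ Y ∈ 𝒞, ∀ (u : ℕ), (((X \ D) ∪ {u}) ∩ Y).Nonempty := by
    intro X hX Y hY u
    obtain ⟨z, hz⟩ := hrawμ Y hY X hX u
    rw [Finset.mem_inter] at hz
    exact ⟨z, Finset.mem_inter.mpr ⟨hz.2, hz.1⟩⟩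
  have hrawE : ∀ C, C ∈ 𝒞 → C ∉ 𝒞A → (C ∩ ((A \ D) ∪ {n+1})).Nonempty := by
    intro C hC hCA
    obtain ⟨z, hz⟩ := hrawmeetsAD C hC hCA
    rw [Finset.mem_inter] at hz
    exact ⟨z, Finset.mem_inter.mpr ⟨hz.1, Finset.mem_union_left _ hz.2⟩⟩
  have hEraw : ∀ C, C ∈ 𝒞 → C ∉ 𝒞A → (((A \ D) ∪ {n+1}) ∩ C).Nonempty := by
    intro C hC hCA
    obtain ⟨z, hz⟩ := hrawE C hC hCA
    rw [Finset.mem_inter] at hz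
    exact ⟨z, Finset.mem_inter.mpr ⟨hz.2, hz.1⟩⟩
  have h𝒞Asub𝒞 : ∀ C ∈ 𝒞A, C ∈ 𝒞 := fun C hC => (Finset.mem_filter.mp hC).1
  refine ⟨n+1, hωP, ?_⟩
  apply scheme_le_alpha s (n+1) hs (by omega) 𝒦
  · intro kk hkk
    rcases hKelim kk hkk with ⟨C, hC, rfl | rfl⟩ | ⟨C, hC, rfl | rfl⟩ | rfl <;> norm_num
  · intro kk hkk
    have hIccn : Finset.Icc 1 n ⊆ Finset.Icc 1 (n+1) := by
      intro z hz; rw [Finset.mem_Icc] at hz ⊢; omega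
    have hωIcc : (n+1) ∈ Finset.Icc 1 (n+1) := by rw [Finset.mem_Icc]; omega
    have haIcc : a ∈ Finset.Icc 1 (n+1) := by rw [Finset.mem_Icc]; omega
    rcases hKelim kk hkk with ⟨C, hC, rfl | rfl⟩ | ⟨C, hC, rfl | rfl⟩ | rfl
    · exact (h𝒞sub C hC.1).trans hIccn
    · exact (h𝒞sub C hC.1).trans hIccn
    · show (C \ D) ∪ {n+1} ⊆ Finset.Icc 1 (n+1)
      apply Finset.union_subset
      · exact (Finset.sdiff_subset.trans (h𝒞sub C (h𝒞Asub𝒞 C hC))).trans hIccn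
      · exact Finset.singleton_subset_iff.mpr hωIcc
    · show (C \ D) ∪ {a} ⊆ Finset.Icc 1 (n+1)
      apply Finset.union_subset
      · exact (Finset.sdiff_subset.trans (h𝒞sub C (h𝒞Asub𝒞 C hC))).trans hIccn
      · exact Finset.singleton_subset_iff.mpr haIcc
    · show (A \ D) ∪ {n+1} ⊆ Finset.Icc 1 (n+1)
      apply Finset.union_subset
      · exact (Finset.sdiff_subset.trans hAsub).trans hIccn
      · exact Finset.singleton_subset_iff.mpr hωIcc
  · intro kk hkk
    rcases hKelim kk hkk with ⟨C, hC, rfl | rfl⟩ | ⟨C, hC, rfl | rfl⟩ | rfl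
    · exact h𝒞card C hC.1
    · exact h𝒞card C hC.1
    · exact le_trans (Finset.card_union_le _ _) (by simpa using hμcard C hC)
    · exact le_trans (Finset.card_union_le _ _) (by simpa using hμcard C hC)
    · exact le_trans (Finset.card_union_le _ _) (by simpa using hEcard)
  · intro kk hkk kk' hkk'
    have haE : a ∈ (A \ D) ∪ {n+1} := Finset.mem_union_left _ ha
    have hωE : (n+1) ∈ (A \ D) ∪ {n+1} := Finset.mem_union_right _ (by simp)
    rcases hKelim kk hkk with ⟨C, hC, rfl | rfl⟩ | ⟨C, hC, rfl | rfl⟩ | rfl <;>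
      rcases hKelim kk' hkk' with ⟨C', hC', rfl | rfl⟩ | ⟨C', hC', rfl | rfl⟩ | rfl <;>
      simp only
    · exact hpair C hC.1 C' hC'.1
    · exact hpair C hC.1 C' hC'.1
    · exact hrawμ C hC.1 C' (h𝒞Asub𝒞 C' hC') _
    · exact hrawμ C hC.1 C' (h𝒞Asub𝒞 C' hC') _
    · exact hrawE C hC.1 hC.2
    · exact hpair C hC.1 C' hC'.1
    · exact hpair C hC.1 C' hC'.1
    · exact hrawμ C hC.1 C' (h𝒞Asub𝒞 C' hC') _
    · exact hrawμ C hC.1 C' (h𝒞Asub𝒞 C' hC') _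
    · exact hrawE C hC.1 hC.2
    · exact hμraw C (h𝒞Asub𝒞 C hC) C' hC'.1 _
    · exact hμraw C (h𝒞Asub𝒞 C hC) C' hC'.1 _
    · exact ⟨n+1, Finset.mem_inter.mpr ⟨Finset.mem_union_right _ (by simp),
        Finset.mem_union_right _ (by simp)⟩⟩
    · exact hcrossμ C (h𝒞Asub𝒞 C hC) C' (h𝒞Asub𝒞 C' hC') _ _
    · exact ⟨n+1, Finset.mem_inter.mpr ⟨Finset.mem_union_right _ (by simp), hωE⟩⟩
    · exact hμraw C (h𝒞Asub𝒞 C hC) C' hC'.1 _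
    · exact hμraw C (h𝒞Asub𝒞 C hC) C' hC'.1 _
    · exact hcrossμ C (h𝒞Asub𝒞 C hC) C' (h𝒞Asub𝒞 C' hC') _ _
    · exact ⟨a, Finset.mem_inter.mpr ⟨Finset.mem_union_right _ (by simp),
        Finset.mem_union_right _ (by simp)⟩⟩
    · exact ⟨a, Finset.mem_inter.mpr ⟨Finset.mem_union_right _ (by simp), haE⟩⟩
    · exact hEraw C' hC'.1 hC'.2
    · exact hEraw C' hC'.1 hC'.2
    · exact ⟨n+1, Finset.mem_inter.mpr ⟨hωE, Finset.mem_union_right _ (by simp)⟩⟩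
    · exact ⟨a, Finset.mem_inter.mpr ⟨haE, Finset.mem_union_right _ (by simp)⟩⟩
    · exact ⟨n+1, Finset.mem_inter.mpr ⟨hωE, hωE⟩⟩
  · intro x hx
    rcases Finset.mem_insert.mp hx with rfl | hxP
    · -- the new point n+1 : from E ∩ μ(Cs)
      refine ⟨(4, (A \ D) ∪ {n+1}), ?_, (2, (Cs \ D) ∪ {n+1}), ?_, by simp, ?_⟩
      · rw [h𝒦]; simp
      · rw [h𝒦]; simp only [Finset.mem_union, Finset.mem_image, Finset.mem_singleton]
        exact Or.inl (Or.inl (Or.inr ⟨Cs, hCsA, rfl⟩))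
      · show ((A \ D) ∪ {n+1}) ∩ ((Cs \ D) ∪ {n+1}) = {n+1}
        ext z
        simp only [Finset.mem_inter, Finset.mem_union, Finset.mem_sdiff, Finset.mem_singleton]
        constructor
        · rintro ⟨h1 | rfl, h2 | h2⟩
          · exfalso
            have : z ∈ Cs ∩ (A \ D) := Finset.mem_inter.mpr
              ⟨h2.1, Finset.mem_sdiff.mpr ⟨h1.1, h1.2⟩⟩
            rw [hCscling] at this
            exact absurd this (Finset.notMem_empty z)
          · exfalso
            have := Finset.mem_Icc.mp (hAsub h1.1)
            omega
          · exfalso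
            have := Finset.mem_Icc.mp (h𝒞sub Cs hCs𝒞 h2.1)
            omega
          · rfl
        · rintro rfl
          exact ⟨Or.inr rfl, Or.inr rfl⟩
    · obtain ⟨X, hX, Y, hY, hXY⟩ := mem_interPts_iff.mp hxP
      have hxX : x ∈ X := by
        have : x ∈ X ∩ Y := by rw [hXY]; simp
        exact (Finset.mem_inter.mp this).1
      have hxY : x ∈ Y := by
        have : x ∈ X ∩ Y := by rw [hXY]; simp
        exact (Finset.mem_inter.mp this).2
      have hxn := Finset.mem_Icc.mp (h𝒞sub X hX hxX)
      have hxD : x ∉ D := fun h => hDP x h hxP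
      by_cases hXA : X ∈ 𝒞A <;> by_cases hYA : Y ∈ 𝒞A
      · -- both cling: use ρ(X) and μ(Y)
        refine ⟨(3, (X \ D) ∪ {a}), ?_, (2, (Y \ D) ∪ {n+1}), ?_, by simp, ?_⟩
        · rw [h𝒦]; simp only [Finset.mem_union, Finset.mem_image, Finset.mem_singleton]
          exact Or.inl (Or.inr ⟨X, hXA, rfl⟩)
        · rw [h𝒦]; simp only [Finset.mem_union, Finset.mem_image, Finset.mem_singleton]
          exact Or.inl (Or.inl (Or.inr ⟨Y, hYA, rfl⟩))
        · show ((X \ D) ∪ {a}) ∩ ((Y \ D) ∪ {n+1}) = {x}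
          ext z
          simp only [Finset.mem_inter, Finset.mem_union, Finset.mem_sdiff, Finset.mem_singleton]
          constructor
          · rintro ⟨h1 | rfl, h2 | h2⟩
            · have : z ∈ X ∩ Y := Finset.mem_inter.mpr ⟨h1.1, h2.1⟩
              rw [hXY, Finset.mem_singleton] at this
              exact this
            · exfalso
              have := Finset.mem_Icc.mp (h𝒞sub X hX h1.1)
              omega
            · exact absurd h2.1 (hanotin Y hYA)
            · exfalso; omega
          · rintro rfl
            exact ⟨Or.inl ⟨hxX, hxD⟩, Or.inl ⟨hxY, hxD⟩⟩
      · -- X clings, Y raw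
        refine ⟨(2, (X \ D) ∪ {n+1}), ?_, (0, Y), ?_, by simp, ?_⟩
        · rw [h𝒦]; simp only [Finset.mem_union, Finset.mem_image, Finset.mem_singleton]
          exact Or.inl (Or.inl (Or.inr ⟨X, hXA, rfl⟩))
        · rw [h𝒦]; simp only [Finset.mem_union, Finset.mem_image, Finset.mem_singleton,
            Finset.mem_sdiff]
          exact Or.inl (Or.inl (Or.inl (Or.inl ⟨Y, ⟨hY, hYA⟩, rfl⟩)))
        · show ((X \ D) ∪ {n+1}) ∩ Y = {x}
          ext z
          simp only [Finset.mem_inter, Finset.mem_union, Finset.mem_sdiff, Finset.mem_singleton]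
          constructor
          · rintro ⟨h1 | rfl, h2⟩
            · have : z ∈ X ∩ Y := Finset.mem_inter.mpr ⟨h1.1, h2⟩
              rw [hXY, Finset.mem_singleton] at this
              exact this
            · exfalso
              have := Finset.mem_Icc.mp (h𝒞sub Y hY h2)
              omega
          · rintro rfl
            exact ⟨Or.inl ⟨hxX, hxD⟩, hxY⟩
      · -- X raw, Y clings
        refine ⟨(0, X), ?_, (2, (Y \ D) ∪ {n+1}), ?_, by simp, ?_⟩
        · rw [h𝒦]; simp only [Finset.mem_union, Finset.mem_image, Finset.mem_singleton,
            Finset.mem_sdiff]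
          exact Or.inl (Or.inl (Or.inl (Or.inl ⟨X, ⟨hX, hXA⟩, rfl⟩)))
        · rw [h𝒦]; simp only [Finset.mem_union, Finset.mem_image, Finset.mem_singleton]
          exact Or.inl (Or.inl (Or.inr ⟨Y, hYA, rfl⟩))
        · show X ∩ ((Y \ D) ∪ {n+1}) = {x}
          ext z
          simp only [Finset.mem_inter, Finset.mem_union, Finset.mem_sdiff, Finset.mem_singleton]
          constructor
          · rintro ⟨h1, h2 | rfl⟩
            · have : z ∈ X ∩ Y := Finset.mem_inter.mpr ⟨h1, h2.1⟩
              rw [hXY, Finset.mem_singleton] at this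
              exact this
            · exfalso
              have := Finset.mem_Icc.mp (h𝒞sub X hX h1)
              omega
          · rintro rfl
            exact ⟨hxX, Or.inl ⟨hxY, hxD⟩⟩
      · -- both raw
        refine ⟨(0, X), ?_, (1, Y), ?_, by simp, hXY⟩
        · rw [h𝒦]; simp only [Finset.mem_union, Finset.mem_image, Finset.mem_singleton,
            Finset.mem_sdiff]
          exact Or.inl (Or.inl (Or.inl (Or.inl ⟨X, ⟨hX, hXA⟩, rfl⟩)))
        · rw [h𝒦]; simp only [Finset.mem_union, Finset.mem_image, Finset.mem_singleton,
            Finset.mem_sdiff]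
          exact Or.inl (Or.inl (Or.inl (Or.inr ⟨Y, ⟨hY, hYA⟩, rfl⟩)))

/-- Lemma 3 (extension lemma): if `A, B ∈ [n]^(r)` with `|A ∩ B| = l`, `𝒞` is a family of subsets
of `[n]` each of size at most `r-k+1` with `|𝒞⟨1⟩| = α^(r-k+1)`, and `𝒞 ∪ {A, B}` is intersecting,
then `A ∩ B` meets `𝒞⟨1⟩`. -/
theorem stmt_6 (n r l k : ℕ) (hk : 1 ≤ k) (hkl : k ≤ l) (hlr : l ≤ r) (hrn : r ≤ n)
    (A B : Finset ℕ) (hA : A ∈ ksets n r) (hB : B ∈ ksets n r)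
    (hD : (A ∩ B).card = l)
    (𝒞 : Finset (Finset ℕ)) (h𝒞 : ∀ C ∈ 𝒞, C ⊆ grd n ∧ C.card ≤ r - k + 1)
    (hE : IsIntersecting (𝒞 ∪ {A, B}))
    (hα : (interPts 𝒞).card = alpha (r - k + 1)) :
    ((A ∩ B) ∩ interPts 𝒞).Nonempty := by
  classical
  have hn : 1 ≤ n := by omega
  have hs1 : 1 ≤ r - k + 1 := by omega
  have hAsub : A ⊆ Finset.Icc 1 n := (Finset.mem_powersetCard.mp hA).1
  have hBsub : B ⊆ Finset.Icc 1 n := (Finset.mem_powersetCard.mp hB).1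
  have hAcard : A.card = r := (Finset.mem_powersetCard.mp hA).2
  have hBcard : B.card = r := (Finset.mem_powersetCard.mp hB).2
  have h𝒞sub : ∀ C ∈ 𝒞, C ⊆ Finset.Icc 1 n := fun C hC => (h𝒞 C hC).1
  have h𝒞card : ∀ C ∈ 𝒞, C.card ≤ r - k + 1 := fun C hC => (h𝒞 C hC).2
  have hmemA : A ∈ 𝒞 ∪ {A, B} := Finset.mem_union_right _ (by simp)
  have hmemB : B ∈ 𝒞 ∪ {A, B} := Finset.mem_union_right _ (by simp)
  have hpair : ∀ X ∈ 𝒞, ∀ Y ∈ 𝒞, (X ∩ Y).Nonempty := fun X hX Y hY =>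
    hE X (Finset.mem_union_left _ hX) Y (Finset.mem_union_left _ hY)
  have hmeetA : ∀ C ∈ 𝒞, (C ∩ A).Nonempty := fun C hC =>
    hE C (Finset.mem_union_left _ hC) A hmemA
  have hmeetB : ∀ C ∈ 𝒞, (C ∩ B).Nonempty := fun C hC =>
    hE C (Finset.mem_union_left _ hC) B hmemB
  have hADcard : (A \ (A ∩ B)).card = r - l := by
    rw [Finset.card_sdiff_of_subset Finset.inter_subset_left, hAcard, hD]
  have hBDcard : (B \ (A ∩ B)).card = r - l := by
    rw [Finset.card_sdiff_of_subset Finset.inter_subset_right, hBcard, hD]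
  -- dispatch 𝒞 = ∅
  rcases Finset.eq_empty_or_nonempty 𝒞 with rfl | h𝒞ne
  · exfalso
    have hempty : interPts (∅ : Finset (Finset ℕ)) = ∅ := by
      simp [interPts, interk]
    rw [hempty] at hα
    have := alpha_pos hs1
    simp at hα
    omega
  -- s = 1 case: direct
  by_cases hs2 : r - k + 1 = 1
  · obtain ⟨C₀, hC₀⟩ := h𝒞ne
    obtain ⟨y, hy⟩ := hpair C₀ hC₀ C₀ hC₀
    rw [Finset.inter_self] at hy
    have hC₀card : C₀.card = 1 := by
      have h1 := h𝒞card C₀ hC₀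
      have h2 : 1 ≤ C₀.card := Finset.card_pos.mpr ⟨y, hy⟩
      omega
    have hC₀y : C₀ = {y} := by
      obtain ⟨a, hae⟩ := Finset.card_eq_one.mp hC₀card
      subst hae
      rw [Finset.mem_singleton] at hy
      rw [hy]
    have hyA : y ∈ A := by
      obtain ⟨z, hz⟩ := hmeetA C₀ hC₀
      rw [Finset.mem_inter, hC₀y, Finset.mem_singleton] at hz
      rw [← hz.1]
      exact hz.2
    have hyB : y ∈ B := by
      obtain ⟨z, hz⟩ := hmeetB C₀ hC₀
      rw [Finset.mem_inter, hC₀y, Finset.mem_singleton] at hz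
      rw [← hz.1]
      exact hz.2
    refine ⟨y, Finset.mem_inter.mpr ⟨Finset.mem_inter.mpr ⟨hyA, hyB⟩, ?_⟩⟩
    rw [mem_interPts_iff]
    exact ⟨C₀, hC₀, C₀, hC₀, by rw [Finset.inter_self, hC₀y]⟩
  · -- s ≥ 2
    have hs2' : 2 ≤ r - k + 1 := by omega
    by_contra hgoal
    rw [Finset.not_nonempty_iff_eq_empty] at hgoal
    have hDP : ∀ x ∈ A ∩ B, x ∉ interPts 𝒞 := by
      intro x hx hxP
      have : x ∈ (A ∩ B) ∩ interPts 𝒞 := Finset.mem_inter.mpr ⟨hx, hxP⟩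
      rw [hgoal] at this
      exact absurd this (Finset.notMem_empty x)
    have hfin : ∀ y, y ∉ interPts 𝒞 → (insert y (interPts 𝒞)).card ≤ alpha (r - k + 1) → False := by
      intro y h1 h2
      rw [Finset.card_insert_of_notMem h1, hα] at h2
      omega
    by_cases hpairD : ∃ X ∈ 𝒞, ∃ Y ∈ 𝒞, X ∩ Y ⊆ A ∩ B
    · obtain ⟨y, h1, h2⟩ := probe9_contra n (r-k+1) hs1 hn 𝒞 (A ∩ B) h𝒞sub h𝒞card hpair hpairD hDP
      exact hfin y h1 h2
    · push_neg at hpairD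
      have h9 : ∀ X ∈ 𝒞, ∀ Y ∈ 𝒞, ((X ∩ Y) \ (A ∩ B)).Nonempty := by
        intro X hX Y hY
        obtain ⟨z, hz1, hz2⟩ := Finset.not_subset.mp (hpairD X hX Y hY)
        exact ⟨z, Finset.mem_sdiff.mpr ⟨hz1, hz2⟩⟩
      by_cases h𝒞Ane : ∃ C ∈ 𝒞, C ∩ (A \ (A ∩ B)) = ∅
      · by_cases hADne : (A \ (A ∩ B)).Nonempty
        · obtain ⟨y, h1, h2⟩ := schemeA_contra n (r-k+1) hs1 hn 𝒞 A (A ∩ B) h𝒞sub h𝒞card hAsub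
            (by omega) hpair h9 hDP hADne h𝒞Ane hmeetA
          exact hfin y h1 h2
        · rw [Finset.not_nonempty_iff_eq_empty] at hADne
          have hAD : A ⊆ A ∩ B := by
            intro z hz
            by_contra hzD
            have : z ∈ A \ (A ∩ B) := Finset.mem_sdiff.mpr ⟨hz, hzD⟩
            rw [hADne] at this
            exact absurd this (Finset.notMem_empty z)
          have hmeetD : ∀ C ∈ 𝒞, (C ∩ (A ∩ B)).Nonempty := by
            intro C hC
            obtain ⟨z, hz⟩ := hmeetA C hC
            rw [Finset.mem_inter] at hz
            exact ⟨z, Finset.mem_inter.mpr ⟨hz.1, hAD hz.2⟩⟩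
          obtain ⟨y, h1, h2⟩ := schemeIV_contra n (r-k+1) hs2' hn 𝒞 (A ∩ B) h𝒞sub h𝒞card h9
            hmeetD h𝒞ne hDP
          exact hfin y h1 h2
      · push_neg at h𝒞Ane
        have hCA : ∀ C ∈ 𝒞, (C ∩ (A \ (A ∩ B))).Nonempty := by
          intro C hC
          rcases Finset.eq_empty_or_nonempty (C ∩ (A \ (A ∩ B))) with he | hne
          · exact absurd he (Finset.nonempty_iff_ne_empty.mp (h𝒞Ane C hC))
          · exact hne
        by_cases h𝒞Bne : ∃ C ∈ 𝒞, C ∩ (B \ (A ∩ B)) = ∅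
        · by_cases hBDne : (B \ (A ∩ B)).Nonempty
          · obtain ⟨y, h1, h2⟩ := schemeA_contra n (r-k+1) hs1 hn 𝒞 B (A ∩ B) h𝒞sub h𝒞card hBsub
              (by omega) hpair h9 hDP hBDne h𝒞Bne hmeetB
            exact hfin y h1 h2
          · rw [Finset.not_nonempty_iff_eq_empty] at hBDne
            have hBD : B ⊆ A ∩ B := by
              intro z hz
              by_contra hzD
              have : z ∈ B \ (A ∩ B) := Finset.mem_sdiff.mpr ⟨hz, hzD⟩
              rw [hBDne] at this
              exact absurd this (Finset.notMem_empty z)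
            have hmeetD : ∀ C ∈ 𝒞, (C ∩ (A ∩ B)).Nonempty := by
              intro C hC
              obtain ⟨z, hz⟩ := hmeetB C hC
              rw [Finset.mem_inter] at hz
              exact ⟨z, Finset.mem_inter.mpr ⟨hz.1, hBD hz.2⟩⟩
            obtain ⟨y, h1, h2⟩ := schemeIV_contra n (r-k+1) hs2' hn 𝒞 (A ∩ B) h𝒞sub h𝒞card h9
              hmeetD h𝒞ne hDP
            exact hfin y h1 h2
        · push_neg at h𝒞Bne
          have hCB : ∀ C ∈ 𝒞, (C ∩ (B \ (A ∩ B))).Nonempty := by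
            intro C hC
            rcases Finset.eq_empty_or_nonempty (C ∩ (B \ (A ∩ B))) with he | hne
            · exact absurd he (Finset.nonempty_iff_ne_empty.mp (h𝒞Bne C hC))
            · exact hne
          have hABdisj : (A \ (A ∩ B)) ∩ (B \ (A ∩ B)) = ∅ := by
            apply Finset.eq_empty_of_forall_notMem
            intro z hz
            rw [Finset.mem_inter, Finset.mem_sdiff, Finset.mem_sdiff] at hz
            exact hz.1.2 (Finset.mem_inter.mpr ⟨hz.1.1, hz.2.1⟩)
          obtain ⟨y, h1, h2⟩ := schemeII_contra n (r-k+1) hs1 hn 𝒞 A B (A ∩ B) h𝒞sub h𝒞card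
            (Finset.sdiff_subset.trans hAsub) (Finset.sdiff_subset.trans hBsub) hABdisj
            (by omega) (by omega) hpair hCA hCB
          exact hfin y h1 h2
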